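/- Let V be a finite set, E a nonempty finite multiset of edges on V (each edge an unordered pair of distinct vertices), L a laminar family of nonempty subsets of V with |L| = |E|, f : L → ℤ with f(S) ≥ 1 for all S ∈ L, and x : E → ℝ with 0 < x_e < 1 for all e such that x(δ(S)) = f(S) for every S ∈ L and the characteristic vectors χ(δ(S)), S ∈ L, are linearly independent in ℝ^E. Then there exists an edge e ∈ E with x_e ≥ 1/2. -/
import Mathlib


open Finset

/-- `δ(T)`: the indices of edges with exactly one endpoint in `T`. Edges are given as an
indexed family with endpoint maps `a b : ι → V`. -/
def cutEdges {V ι : Type*} [DecidableEq V] [Fintype ι] (a b : ι → V) (T : Finset V) :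
    Finset ι :=
  Finset.univ.filter (fun i => ¬((a i ∈ T) ↔ (b i ∈ T)))

/-- `x(δ(T)) = Σ_{e ∈ δ(T)} x_e`. -/
def xCut {V ι : Type*} [DecidableEq V] [Fintype ι] (a b : ι → V) (x : ι → ℝ)
    (T : Finset V) : ℝ :=
  ∑ i ∈ cutEdges a b T, x i

/-- `χ(δ(T)) ∈ {0,1}^E`, the characteristic vector of `δ(T)`. -/
def chiCut {V ι : Type*} [DecidableEq V] [Fintype ι] [DecidableEq ι] (a b : ι → V)
    (T : Finset V) : ι → ℝ :=
  fun i => if i ∈ cutEdges a b T then 1 else 0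

namespace Jain

variable {V : Type*} [DecidableEq V]

/-- maximal proper subsets of `S` within `L` -/
def children (L : Finset (Finset V)) (S : Finset V) : Finset (Finset V) :=
  L.filter (fun T => T ⊂ S ∧ ∀ U ∈ L, T ⊂ U → ¬ U ⊂ S)

theorem children_ssub {L : Finset (Finset V)} {S C : Finset V} (h : C ∈ children L S) :
    C ⊂ S := (Finset.mem_filter.mp h).2.1

theorem children_mem {L : Finset (Finset V)} {S C : Finset V} (h : C ∈ children L S) :
    C ∈ L := (Finset.mem_filter.mp h).1

theorem children_disj {L : Finset (Finset V)}
    (hlam : ∀ S ∈ L, ∀ T ∈ L, Disjoint S T ∨ S ⊆ T ∨ T ⊆ S)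
    {S C C' : Finset V} (hC : C ∈ children L S) (hC' : C' ∈ children L S)
    (hne : C ≠ C') : Disjoint C C' := by
  obtain ⟨hCL, hCS, hCmax⟩ := Finset.mem_filter.mp hC
  obtain ⟨hC'L, hC'S, hC'max⟩ := Finset.mem_filter.mp hC'
  rcases hlam C hCL C' hC'L with h | h | h
  · exact h
  · exact absurd hC'S (hCmax C' hC'L (Finset.ssubset_iff_subset_ne.mpr ⟨h, hne⟩))
  · exact absurd hCS (hC'max C hCL (Finset.ssubset_iff_subset_ne.mpr ⟨h, (Ne.symm hne)⟩))

theorem exists_child {L : Finset (Finset V)} {S T : Finset V}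
    (hT : T ∈ L) (hTS : T ⊂ S) : ∃ C ∈ children L S, T ⊆ C := by
  obtain ⟨C, hC, hCmax⟩ := Finset.exists_max_image
    (L.filter (fun U => T ⊆ U ∧ U ⊂ S)) Finset.card
    ⟨T, Finset.mem_filter.mpr ⟨hT, Finset.Subset.refl T, hTS⟩⟩
  obtain ⟨hCL, hTC, hCS⟩ := Finset.mem_filter.mp hC
  refine ⟨C, Finset.mem_filter.mpr ⟨hCL, hCS, ?_⟩, hTC⟩
  intro U hU hCU hUS
  have := hCmax U (Finset.mem_filter.mpr ⟨hU, hTC.trans hCU.subset, hUS⟩)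
  exact absurd this (not_le.mpr (Finset.card_lt_card hCU))

/-- a vertex lies in at most one child -/
theorem card_children_mem_le_one {L : Finset (Finset V)}
    (hlam : ∀ S ∈ L, ∀ T ∈ L, Disjoint S T ∨ S ⊆ T ∨ T ⊆ S)
    (S : Finset V) (v : V) :
    ((children L S).filter (fun C => v ∈ C)).card ≤ 1 := by
  rw [Finset.card_le_one]
  intro C hC C' hC'
  obtain ⟨hC1, hC2⟩ := Finset.mem_filter.mp hC
  obtain ⟨hC'1, hC'2⟩ := Finset.mem_filter.mp hC'
  by_contra hne
  exact (Finset.disjoint_left.mp (children_disj hlam hC1 hC'1 hne)) hC2 hC'2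

theorem minA_iff {L : Finset (Finset V)}
    (hlam : ∀ S ∈ L, ∀ T ∈ L, Disjoint S T ∨ S ⊆ T ∨ T ⊆ S)
    {S : Finset V} (hS : S ∈ L) (v : V) :
    (v ∈ S ∧ ∀ T ∈ L, v ∈ T → S ⊆ T) ↔ (v ∈ S ∧ ∀ C ∈ children L S, v ∉ C) := by
  constructor
  · rintro ⟨hv, hmin⟩
    refine ⟨hv, fun C hC hvC => ?_⟩
    exact (children_ssub hC).2 (hmin C (children_mem hC) hvC)
  · rintro ⟨hv, hnc⟩
    refine ⟨hv, fun T hT hvT => ?_⟩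
    rcases hlam T hT S hS with h | h | h
    · exact absurd hv (Finset.disjoint_left.mp h hvT)
    · rcases eq_or_ne T S with rfl | hne
      · exact Finset.Subset.refl _
      · obtain ⟨C, hC, hTC⟩ := exists_child hT (Finset.ssubset_iff_subset_ne.mpr ⟨h, hne⟩)
        exact absurd (hTC hvT) (hnc C hC)
    · exact h

theorem minAB_iff {L : Finset (Finset V)}
    (hlam : ∀ S ∈ L, ∀ T ∈ L, Disjoint S T ∨ S ⊆ T ∨ T ⊆ S)
    {S : Finset V} (hS : S ∈ L) (u v : V) :
    (u ∈ S ∧ v ∈ S ∧ ∀ T ∈ L, u ∈ T → v ∈ T → S ⊆ T) ↔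
      (u ∈ S ∧ v ∈ S ∧ ∀ C ∈ children L S, ¬(u ∈ C ∧ v ∈ C)) := by
  constructor
  · rintro ⟨hu, hv, hmin⟩
    refine ⟨hu, hv, fun C hC ⟨huC, hvC⟩ => ?_⟩
    exact (children_ssub hC).2 (hmin C (children_mem hC) huC hvC)
  · rintro ⟨hu, hv, hnc⟩
    refine ⟨hu, hv, fun T hT huT hvT => ?_⟩
    rcases hlam T hT S hS with h | h | h
    · exact absurd hu (Finset.disjoint_left.mp h huT)
    · rcases eq_or_ne T S with rfl | hne
      · exact Finset.Subset.refl _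
      · obtain ⟨C, hC, hTC⟩ := exists_child hT (Finset.ssubset_iff_subset_ne.mpr ⟨h, hne⟩)
        exact absurd ⟨hTC huT, hTC hvT⟩ (hnc C hC)
    · exact h


variable {ι : Type*} [Fintype ι] [DecidableEq ι]

def tokEdge (a b : ι → V) (L : Finset (Finset V)) (x : ι → ℝ) (i : ι) (S : Finset V) : ℝ :=
  (if a i ∈ S ∧ ∀ T ∈ L, a i ∈ T → S ⊆ T then x i else 0) +
  (if b i ∈ S ∧ ∀ T ∈ L, b i ∈ T → S ⊆ T then x i else 0) +
  (if a i ∈ S ∧ b i ∈ S ∧ ∀ T ∈ L, a i ∈ T → b i ∈ T → S ⊆ T then 1 - 2 * x i else 0)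

theorem tokEdge_nonneg {a b : ι → V} {L : Finset (Finset V)} {x : ι → ℝ} {i : ι}
    {S : Finset V} (h0 : 0 < x i) (h2 : x i < 1 / 2) : 0 ≤ tokEdge a b L x i S := by
  unfold tokEdge
  have h1 : (0:ℝ) ≤ x i := le_of_lt h0
  have h3 : (0:ℝ) ≤ 1 - 2 * x i := by linarith
  positivity

theorem edge_key {a b : ι → V} {L : Finset (Finset V)} {x : ι → ℝ}
    (hlam : ∀ S ∈ L, ∀ T ∈ L, Disjoint S T ∨ S ⊆ T ∨ T ⊆ S)
    {S : Finset V} (hS : S ∈ L) (i : ι) (h0 : 0 < x i) (h2 : x i < 1 / 2) :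
    ∃ n : ℕ,
      tokEdge a b L x i S
        = chiCut a b S i * x i - (∑ C ∈ children L S, chiCut a b C i) * x i + n
      ∧ (tokEdge a b L x i S = 0 →
          chiCut a b S i = ∑ C ∈ children L S, chiCut a b C i) := by
  classical
  set ch := children L S with hch
  set na := (ch.filter (fun C => a i ∈ C)).card with hna
  set nb := (ch.filter (fun C => b i ∈ C)).card with hnb
  set nab := (ch.filter (fun C => a i ∈ C ∧ b i ∈ C)).card with hnab
  have hna1 : na ≤ 1 := card_children_mem_le_one hlam S (a i)
  have hnb1 : nb ≤ 1 := card_children_mem_le_one hlam S (b i)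
  have hnab_a : nab ≤ na := by
    apply Finset.card_le_card
    intro C hC
    rw [Finset.mem_filter] at hC ⊢
    exact ⟨hC.1, hC.2.1⟩
  have hnab_b : nab ≤ nb := by
    apply Finset.card_le_card
    intro C hC
    rw [Finset.mem_filter] at hC ⊢
    exact ⟨hC.1, hC.2.2⟩
  -- the cross-sum
  have hcross : (∑ C ∈ ch, chiCut a b C i) + 2 * (nab : ℝ) = (na : ℝ) + nb := by
    have key : ∀ C ∈ ch,
        chiCut a b C i + 2 * (if a i ∈ C ∧ b i ∈ C then (1:ℝ) else 0)
          = (if a i ∈ C then (1:ℝ) else 0) + (if b i ∈ C then (1:ℝ) else 0) := by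
      intro C _
      by_cases hA : a i ∈ C <;> by_cases hB : b i ∈ C <;>
        simp [chiCut, cutEdges, hA, hB] <;> norm_num
    have := Finset.sum_congr rfl key
    rw [Finset.sum_add_distrib, Finset.sum_add_distrib, ← Finset.mul_sum] at this
    rw [hnab, hna, hnb, Finset.card_filter, Finset.card_filter]
    push_cast [Finset.card_filter]
    rw [Finset.sum_boole, Finset.sum_boole, Finset.sum_boole] at this ⊢
    convert this using 2 <;> simp
  -- rewrite the token conditions in terms of the counts
  have ea : (a i ∈ S ∧ ∀ T ∈ L, a i ∈ T → S ⊆ T) ↔ (a i ∈ S ∧ na = 0) := by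
    rw [minA_iff hlam hS]
    rw [hna, Finset.card_eq_zero, Finset.filter_eq_empty_iff]
  have eb : (b i ∈ S ∧ ∀ T ∈ L, b i ∈ T → S ⊆ T) ↔ (b i ∈ S ∧ nb = 0) := by
    rw [minA_iff hlam hS]
    rw [hnb, Finset.card_eq_zero, Finset.filter_eq_empty_iff]
  have eab : (a i ∈ S ∧ b i ∈ S ∧ ∀ T ∈ L, a i ∈ T → b i ∈ T → S ⊆ T) ↔
      (a i ∈ S ∧ b i ∈ S ∧ nab = 0) := by
    rw [minAB_iff hlam hS]
    rw [hnab, Finset.card_eq_zero, Finset.filter_eq_empty_iff]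
  have hsubS : ∀ C ∈ ch, C ⊆ S := fun C hC => (children_ssub hC).subset
  have hnaS : a i ∉ S → na = 0 := by
    intro h
    rw [hna, Finset.card_eq_zero, Finset.filter_eq_empty_iff]
    exact fun C hC hai => h (hsubS C hC hai)
  have hnbS : b i ∉ S → nb = 0 := by
    intro h
    rw [hnb, Finset.card_eq_zero, Finset.filter_eq_empty_iff]
    exact fun C hC hbi => h (hsubS C hC hbi)
  have hchiS : chiCut a b S i = if ¬(a i ∈ S ↔ b i ∈ S) then 1 else 0 := by
    simp [chiCut, cutEdges]
  set s := ∑ C ∈ ch, chiCut a b C i with hs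
  simp only [tokEdge, ea, eb, eab, hchiS]
  by_cases hAS : a i ∈ S <;> by_cases hBS : b i ∈ S
  · -- both endpoints in S
    rcases Nat.le_one_iff_eq_zero_or_eq_one.mp hna1 with ha | ha <;>
      rcases Nat.le_one_iff_eq_zero_or_eq_one.mp hnb1 with hb | hb
    · have hab : nab = 0 := by omega
      have hsv : s = 0 := by rw [ha, hb, hab] at hcross; push_cast at hcross; linarith
      refine ⟨1, ?_, ?_⟩
      · simp [hAS, hBS, ha, hb, hab, hsv]
        try linarith
      · simp [hAS, hBS, ha, hb, hab, hsv]
        try intro h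
        try linarith
    · have hab : nab = 0 := by omega
      have hsv : s = 1 := by rw [ha, hb, hab] at hcross; push_cast at hcross; linarith
      refine ⟨1, ?_, ?_⟩
      · simp [hAS, hBS, ha, hb, hab, hsv]
        try linarith
      · simp [hAS, hBS, ha, hb, hab, hsv]
        try intro h
        try linarith
    · have hab : nab = 0 := by omega
      have hsv : s = 1 := by rw [ha, hb, hab] at hcross; push_cast at hcross; linarith
      refine ⟨1, ?_, ?_⟩
      · simp [hAS, hBS, ha, hb, hab, hsv]
        try linarith
      · simp [hAS, hBS, ha, hb, hab, hsv]
        try intro h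
        try linarith
    · rcases Nat.le_one_iff_eq_zero_or_eq_one.mp (hnab_a.trans ha.le) with hab | hab
      · have hsv : s = 2 := by rw [ha, hb, hab] at hcross; push_cast at hcross; linarith
        refine ⟨1, ?_, ?_⟩
        · simp [hAS, hBS, ha, hb, hab, hsv]
          try linarith
        · simp [hAS, hBS, ha, hb, hab, hsv]
          try intro h
          try linarith
      · have hsv : s = 0 := by rw [ha, hb, hab] at hcross; push_cast at hcross; linarith
        refine ⟨0, ?_, ?_⟩ <;> simp [hAS, hBS, ha, hb, hab, hsv]
  · -- a in, b out
    have hb : nb = 0 := hnbS hBS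
    have hab : nab = 0 := by omega
    rcases Nat.le_one_iff_eq_zero_or_eq_one.mp hna1 with ha | ha
    · have hsv : s = 0 := by rw [ha, hb, hab] at hcross; push_cast at hcross; linarith
      refine ⟨0, ?_, ?_⟩
      · simp [hAS, hBS, ha, hb, hab, hsv]
        try linarith
      · simp [hAS, hBS, ha, hb, hab, hsv]
        try intro h
        try linarith
    · have hsv : s = 1 := by rw [ha, hb, hab] at hcross; push_cast at hcross; linarith
      refine ⟨0, ?_, ?_⟩ <;> simp [hAS, hBS, ha, hb, hab, hsv]
  · -- a out, b in
    have ha : na = 0 := hnaS hAS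
    have hab : nab = 0 := by omega
    rcases Nat.le_one_iff_eq_zero_or_eq_one.mp hnb1 with hb | hb
    · have hsv : s = 0 := by rw [ha, hb, hab] at hcross; push_cast at hcross; linarith
      refine ⟨0, ?_, ?_⟩
      · simp [hAS, hBS, ha, hb, hab, hsv]
        try linarith
      · simp [hAS, hBS, ha, hb, hab, hsv]
        try intro h
        try linarith
    · have hsv : s = 1 := by rw [ha, hb, hab] at hcross; push_cast at hcross; linarith
      refine ⟨0, ?_, ?_⟩ <;> simp [hAS, hBS, ha, hb, hab, hsv]
  · -- both out
    have ha : na = 0 := hnaS hAS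
    have hb : nb = 0 := hnbS hBS
    have hab : nab = 0 := by omega
    have hsv : s = 0 := by rw [ha, hb, hab] at hcross; push_cast at hcross; linarith
    refine ⟨0, ?_, ?_⟩ <;> simp [hAS, hBS, ha, hb, hab, hsv]


theorem no_dep {a b : ι → V} {L : Finset (Finset V)}
    (hind : LinearIndependent ℝ (fun S : {T // T ∈ L} => chiCut a b S.val))
    {S : Finset V} (hS : S ∈ L)
    (h : chiCut a b S = ∑ C ∈ children L S, chiCut a b C) : False := by
  classical
  set ch := children L S with hch
  have hSch : S ∉ ch := fun hmem => (children_ssub hmem).ne rfl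
  set c : Finset V → ℝ := fun T => if T = S then 1 else if T ∈ ch then -1 else 0 with hc
  have hsum : ∑ T ∈ L, c T • chiCut a b T = 0 := by
    rw [← Finset.add_sum_erase L _ hS]
    have h2 : ∑ T ∈ L.erase S, c T • chiCut a b T
        = ∑ T ∈ L.erase S, (if T ∈ ch then -chiCut a b T else 0) := by
      apply Finset.sum_congr rfl
      intro T hT
      have hTS : T ≠ S := (Finset.mem_erase.mp hT).1
      by_cases hTc : T ∈ ch <;> simp [hc, hTS, hTc]
    have h3 : (L.erase S).filter (fun T => T ∈ ch) = ch := by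
      ext T
      simp only [Finset.mem_filter, Finset.mem_erase]
      constructor
      · rintro ⟨_, hT⟩
        exact hT
      · intro hT
        exact ⟨⟨fun hTS => hSch (hTS ▸ hT), children_mem hT⟩, hT⟩
    have h4 : c S = 1 := by simp [hc]
    rw [h2, ← Finset.sum_filter, h3, h4, one_smul, h]
    simp
  have hsum2 : ∑ T : {T // T ∈ L}, c T.val • chiCut a b T.val = 0 := by
    rw [Finset.sum_coe_sort L (fun T => c T • chiCut a b T)]
    exact hsum
  have := Fintype.linearIndependent_iff.mp hind (fun T => c T.val) hsum2 ⟨S, hS⟩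
  simp [hc] at this

theorem tok_ge_one {a b : ι → V} {L : Finset (Finset V)} {x : ι → ℝ} {f : Finset V → ℤ}
    (hlam : ∀ S ∈ L, ∀ T ∈ L, Disjoint S T ∨ S ⊆ T ∨ T ⊆ S)
    (hx0 : ∀ i, 0 < x i) (hx2 : ∀ i, x i < 1 / 2)
    (heq : ∀ S ∈ L, xCut a b x S = f S)
    (hind : LinearIndependent ℝ (fun S : {T // T ∈ L} => chiCut a b S.val))
    {S : Finset V} (hS : S ∈ L) :
    1 ≤ ∑ i, tokEdge a b L x i S := by
  classical
  choose n hn h0 using fun i => edge_key hlam hS i (hx0 i) (hx2 i)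
  set ch := children L S with hch
  have hchi : ∀ T : Finset V, ∑ i, chiCut a b T i * x i = xCut a b x T := by
    intro T
    simp only [chiCut, ite_mul, one_mul, zero_mul]
    rw [xCut, ← Finset.sum_filter, Finset.filter_mem_eq_inter, Finset.univ_inter]
  have hsum : ∑ i, tokEdge a b L x i S
      = xCut a b x S - ∑ C ∈ ch, xCut a b x C + ∑ i, (n i : ℝ) := by
    calc ∑ i, tokEdge a b L x i S
        = ∑ i, (chiCut a b S i * x i - (∑ C ∈ ch, chiCut a b C i) * x i + (n i : ℝ)) :=
          Finset.sum_congr rfl (fun i _ => hn i)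
      _ = (∑ i, chiCut a b S i * x i - ∑ i, (∑ C ∈ ch, chiCut a b C i) * x i)
            + ∑ i, (n i : ℝ) := by
          rw [Finset.sum_add_distrib, Finset.sum_sub_distrib]
      _ = _ := by
          rw [hchi S]
          congr 1
          congr 1
          simp only [Finset.sum_mul]
          rw [Finset.sum_comm]
          exact Finset.sum_congr rfl fun C _ => hchi C
  have hnn : ∀ i ∈ Finset.univ, (0:ℝ) ≤ tokEdge a b L x i S :=
    fun i _ => tokEdge_nonneg (hx0 i) (hx2 i)
  rcases eq_or_lt_of_le (Finset.sum_nonneg hnn) with hz | hp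
  · exfalso
    have hzero := (Finset.sum_eq_zero_iff_of_nonneg hnn).mp hz.symm
    apply no_dep hind hS
    funext i
    rw [Finset.sum_apply]
    exact h0 i (hzero i (Finset.mem_univ i))
  · have hint : ∑ i, tokEdge a b L x i S
        = ((f S - ∑ C ∈ ch, f C + ∑ i, (n i : ℤ) : ℤ) : ℝ) := by
      rw [hsum, heq S hS]
      have hC : ∑ C ∈ ch, xCut a b x C = ∑ C ∈ ch, (f C : ℝ) :=
        Finset.sum_congr rfl fun C hC => heq C (children_mem hC)
      rw [hC]
      push_cast
      ring
    rw [hint] at hp ⊢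
    have h1 : (0:ℤ) < f S - ∑ C ∈ ch, f C + ∑ i, (n i : ℤ) := by exact_mod_cast hp
    have h2 : (1:ℤ) ≤ f S - ∑ C ∈ ch, f C + ∑ i, (n i : ℤ) := h1
    exact_mod_cast h2

theorem sum_ite_le {L : Finset (Finset V)} {P : Finset V → Prop} [DecidablePred P]
    (hcard : (L.filter P).card ≤ 1) {c : ℝ} (hc : 0 ≤ c) :
    ∑ S ∈ L, (if P S then c else 0) ≤ c := by
  rw [← Finset.sum_filter, Finset.sum_const, nsmul_eq_mul]
  calc ((L.filter P).card : ℝ) * c ≤ 1 * c := by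
        apply mul_le_mul_of_nonneg_right _ hc
        exact_mod_cast hcard
    _ = c := one_mul c

theorem minA_card_le_one (L : Finset (Finset V)) (v : V) :
    (L.filter (fun S => v ∈ S ∧ ∀ T ∈ L, v ∈ T → S ⊆ T)).card ≤ 1 := by
  rw [Finset.card_le_one]
  intro S hS S' hS'
  obtain ⟨hSL, hvS, hmin⟩ := Finset.mem_filter.mp hS
  obtain ⟨hS'L, hvS', hmin'⟩ := Finset.mem_filter.mp hS'
  exact Finset.Subset.antisymm (hmin S' hS'L hvS') (hmin' S hSL hvS)

theorem minAB_card_le_one (L : Finset (Finset V)) (u v : V) :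
    (L.filter (fun S => u ∈ S ∧ v ∈ S ∧ ∀ T ∈ L, u ∈ T → v ∈ T → S ⊆ T)).card ≤ 1 := by
  rw [Finset.card_le_one]
  intro S hS S' hS'
  obtain ⟨hSL, huS, hvS, hmin⟩ := Finset.mem_filter.mp hS
  obtain ⟨hS'L, huS', hvS', hmin'⟩ := Finset.mem_filter.mp hS'
  exact Finset.Subset.antisymm (hmin S' hS'L huS' hvS') (hmin' S hSL huS hvS)

theorem sum_tok_le_one {a b : ι → V} {L : Finset (Finset V)} {x : ι → ℝ}
    (hx0 : ∀ i, 0 < x i) (hx2 : ∀ i, x i < 1 / 2) (i : ι) :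
    ∑ S ∈ L, tokEdge a b L x i S ≤ 1 := by
  classical
  unfold tokEdge
  rw [Finset.sum_add_distrib, Finset.sum_add_distrib]
  have t1 := sum_ite_le (minA_card_le_one L (a i)) (le_of_lt (hx0 i))
  have t2 := sum_ite_le (minA_card_le_one L (b i)) (le_of_lt (hx0 i))
  have t3 := sum_ite_le (minAB_card_le_one L (a i) (b i))
    (c := 1 - 2 * x i) (by linarith [hx2 i])
  linarith

theorem sum_tok_le_noAB {a b : ι → V} {L : Finset (Finset V)} {x : ι → ℝ}
    (hx0 : ∀ i, 0 < x i) (i : ι)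
    (hno : ∀ S ∈ L, ¬(a i ∈ S ∧ b i ∈ S)) :
    ∑ S ∈ L, tokEdge a b L x i S ≤ 2 * x i := by
  classical
  unfold tokEdge
  rw [Finset.sum_add_distrib, Finset.sum_add_distrib]
  have t1 := sum_ite_le (minA_card_le_one L (a i)) (le_of_lt (hx0 i))
  have t2 := sum_ite_le (minA_card_le_one L (b i)) (le_of_lt (hx0 i))
  have t3 : ∑ S ∈ L,
      (if a i ∈ S ∧ b i ∈ S ∧ ∀ T ∈ L, a i ∈ T → b i ∈ T → S ⊆ T
        then 1 - 2 * x i else 0) = 0 := by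
    apply Finset.sum_eq_zero
    intro S hS
    rw [if_neg]
    rintro ⟨h1, h2, _⟩
    exact hno S hS ⟨h1, h2⟩
  linarith

end Jain

/-- Jain's key counting theorem: given a nonempty multiset `E` of edges, a laminar family
`L` of nonempty sets with `|L| = |E|`, requirements `f(S) ≥ 1`, and a fully fractional
`x` with `x(δ(S)) = f(S)` for all `S ∈ L` and `χ(δ(S))`, `S ∈ L`, linearly independent,
some edge has `x_e ≥ 1/2`. -/
theorem stmt11 {V ι : Type*} [Fintype V] [DecidableEq V] [Fintype ι] [DecidableEq ι]
    [Nonempty ι]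
    (a b : ι → V) (hab : ∀ i, a i ≠ b i)
    (L : Finset (Finset V))
    (hne : ∀ S ∈ L, S.Nonempty)
    (hlam : ∀ S ∈ L, ∀ T ∈ L, Disjoint S T ∨ S ⊆ T ∨ T ⊆ S)
    (hcard : L.card = Fintype.card ι)
    (f : Finset V → ℤ) (hf : ∀ S ∈ L, 1 ≤ f S)
    (x : ι → ℝ) (hx : ∀ i, 0 < x i ∧ x i < 1)
    (heq : ∀ S ∈ L, xCut a b x S = f S)
    (hind : LinearIndependent ℝ (fun S : {T // T ∈ L} => chiCut a b S.val)) :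
    ∃ i : ι, (1 : ℝ) / 2 ≤ x i := by
  classical
  by_contra hcon
  push_neg at hcon
  have hx0 : ∀ i, 0 < x i := fun i => (hx i).1
  have hx2 : ∀ i, x i < 1 / 2 := hcon
  have hLne : L.Nonempty := by
    rw [← Finset.card_pos, hcard]
    exact Fintype.card_pos
  obtain ⟨M, hM, hMmax⟩ := Finset.exists_max_image L Finset.card hLne
  have hMmax' : ∀ T ∈ L, M ⊆ T → T = M := fun T hT hMT =>
    (Finset.eq_of_subset_of_card_le hMT (hMmax T hT)).symm
  have hMcut : (cutEdges a b M).Nonempty := by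
    rw [Finset.nonempty_iff_ne_empty]
    intro hemp
    have hzero : xCut a b x M = 0 := by rw [xCut, hemp]; simp
    have h1 := heq M hM
    have h2 : (1:ℝ) ≤ (f M : ℝ) := by exact_mod_cast hf M hM
    rw [hzero] at h1
    linarith
  obtain ⟨i0, hi0⟩ := hMcut
  have hi0' : ¬(a i0 ∈ M ↔ b i0 ∈ M) := by
    simpa [cutEdges] using hi0
  have hno : ∀ S ∈ L, ¬(a i0 ∈ S ∧ b i0 ∈ S) := by
    rintro S hS ⟨haS, hbS⟩
    rcases hlam S hS M hM with h | h | h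
    · by_cases haM : a i0 ∈ M
      · exact (Finset.disjoint_left.mp h haS) haM
      · have hbM : b i0 ∈ M := by tauto
        exact (Finset.disjoint_left.mp h hbS) hbM
    · exact hi0' (iff_of_true (h haS) (h hbS))
    · have hSM : S = M := hMmax' S hS h
      subst hSM
      exact hi0' (iff_of_true haS hbS)
  have hub : ∑ S ∈ L, ∑ i, Jain.tokEdge a b L x i S < (Fintype.card ι : ℝ) := by
    rw [Finset.sum_comm]
    calc ∑ i, ∑ S ∈ L, Jain.tokEdge a b L x i S < ∑ _i : ι, (1:ℝ) := by
          apply Finset.sum_lt_sum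
          · exact fun i _ => Jain.sum_tok_le_one hx0 hx2 i
          · exact ⟨i0, Finset.mem_univ i0,
              lt_of_le_of_lt (Jain.sum_tok_le_noAB hx0 i0 hno) (by linarith [hx2 i0])⟩
      _ = (Fintype.card ι : ℝ) := by simp
  have hlb : (Fintype.card ι : ℝ) ≤ ∑ S ∈ L, ∑ i, Jain.tokEdge a b L x i S := by
    have h1 : ∀ S ∈ L, (1:ℝ) ≤ ∑ i, Jain.tokEdge a b L x i S :=
      fun S hS => Jain.tok_ge_one hlam hx0 hx2 heq hind hS
    calc (Fintype.card ι : ℝ) = ∑ _S ∈ L, (1:ℝ) := by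
          rw [Finset.sum_const, nsmul_eq_mul, mul_one, hcard]
      _ ≤ _ := Finset.sum_le_sum h1
  linarith
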